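/- arXiv:1610.01456 — 2 statements merged into one kernel-verified Lean document; each statement's English description precedes it below -/
import Mathlib

section
/- For every integer p ≥ 2, the quantity B₁(p) := Σ_{r=1}^{p−1} (r−1)! · C(p−1, r−1)² · √((2(p−r))!) satisfies B₁(p) ≤ (p−1)! · (p−1)^{1/2} · C(2(p−1), p−1), and hence B₁(p) ≤ C · (p−1)! · 4^p for some absolute constant C > 0. -/
noncomputable def B1 (p : ℕ) : ℝ :=
  ∑ r ∈ Finset.Icc 1 (p - 1),
    (Nat.factorial (r - 1) : ℝ) * (Nat.choose (p - 1) (r - 1) : ℝ) ^ 2 *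
      Real.sqrt (Nat.factorial (2 * (p - r)))

open Finset Real

/-- `√((2m)!) = √(C(2m,m)) * m!`. -/
lemma sqrt_fact_two_mul (m : ℕ) :
    Real.sqrt ((2 * m).factorial : ℝ) =
      Real.sqrt ((2 * m).choose m : ℝ) * (m.factorial : ℝ) := by
  have h : (2 * m).choose m * m.factorial * m.factorial = (2 * m).factorial := by
    have := Nat.choose_mul_factorial_mul_factorial (show m ≤ 2 * m by omega)
    simpa [two_mul, Nat.add_sub_cancel] using this
  rw [← h]
  push_cast
  rw [mul_assoc, Real.sqrt_mul (by positivity), Real.sqrt_mul_self (by positivity)]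

/-- Term identity. -/
lemma term_eq {p r : ℕ} (h1 : 1 ≤ r) (h2 : r ≤ p - 1) :
    ((r - 1).factorial : ℝ) * ((p - 1).choose (r - 1) : ℝ) ^ 2 *
        Real.sqrt ((2 * (p - r)).factorial : ℝ) =
      ((p - 1).factorial : ℝ) *
        (((p - 1).choose (r - 1) : ℝ) * Real.sqrt ((2 * (p - r)).choose (p - r) : ℝ)) := by
  have hk : r - 1 ≤ p - 1 := by omega
  have hm : p - 1 - (r - 1) = p - r := by omega
  have hfac : ((p - 1).choose (r - 1) : ℝ) * ((r - 1).factorial : ℝ) * ((p - r).factorial : ℝ)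
      = ((p - 1).factorial : ℝ) := by
    have := Nat.choose_mul_factorial_mul_factorial hk
    rw [hm] at this
    exact_mod_cast congrArg (Nat.cast (R := ℝ)) this
  rw [sqrt_fact_two_mul, ← hfac]
  ring

lemma B1_eq (p : ℕ) :
    B1 p = ((p - 1).factorial : ℝ) *
      ∑ r ∈ Finset.Icc 1 (p - 1),
        ((p - 1).choose (r - 1) : ℝ) * Real.sqrt ((2 * (p - r)).choose (p - r) : ℝ) := by
  unfold B1
  rw [Finset.mul_sum]
  refine Finset.sum_congr rfl fun r hr => ?_
  rw [Finset.mem_Icc] at hr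
  exact term_eq hr.1 hr.2

/-- Vandermonde: sum of squared binomials. -/
lemma sum_choose_sq (n : ℕ) :
    ∑ i ∈ Finset.range (n + 1), (n.choose i) ^ 2 = (2 * n).choose n := by
  rw [two_mul, Nat.add_choose_eq, Finset.Nat.sum_antidiagonal_eq_sum_range_succ_mk]
  refine Finset.sum_congr rfl fun i hi => ?_
  rw [Finset.mem_range] at hi
  rw [Nat.choose_symm (by omega), sq]

lemma central_le (m n : ℕ) (h : m ≤ n) : (2 * m).choose m ≤ (2 * n).choose n := by
  calc (2 * m).choose m ≤ (2 * n).choose m := Nat.choose_le_choose _ (by omega)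
    _ ≤ (2 * n).choose n := by
        simpa [Nat.centralBinom] using Nat.choose_le_centralBinom m n

lemma central_le_four_pow (m : ℕ) : (2 * m).choose m ≤ 4 ^ m := by
  calc (2 * m).choose m ≤ ∑ i ∈ Finset.range (2 * m + 1), (2 * m).choose i :=
        Finset.single_le_sum (fun i _ => Nat.zero_le _) (by simp [Finset.mem_range]; omega)
    _ = 2 ^ (2 * m) := Nat.sum_range_choose _
    _ = 4 ^ m := by rw [pow_mul]; norm_num

theorem stmt_5 :
    (∀ p : ℕ, 2 ≤ p →
      B1 p ≤ (Nat.factorial (p - 1) : ℝ) * Real.sqrt (p - 1) *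
        (Nat.choose (2 * (p - 1)) (p - 1) : ℝ)) ∧
    (∃ C : ℝ, 0 < C ∧ ∀ p : ℕ, 2 ≤ p →
      B1 p ≤ C * (Nat.factorial (p - 1) : ℝ) * 4 ^ p) := by
  constructor
  · intro p hp
    set n := p - 1 with hn
    have hn1 : 1 ≤ n := by omega
    rw [B1_eq]
    have hcs := Real.sum_mul_le_sqrt_mul_sqrt (Finset.Icc 1 n)
      (fun r => ((n.choose (r - 1) : ℝ)))
      (fun r => Real.sqrt ((2 * (p - r)).choose (p - r) : ℝ))
    have hA : ∑ r ∈ Finset.Icc 1 n, ((n.choose (r - 1) : ℝ)) ^ 2 ≤ ((2 * n).choose n : ℝ) := by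
      have hnat : ∑ r ∈ Finset.Icc 1 n, (n.choose (r - 1)) ^ 2 ≤ (2 * n).choose n := by
        rw [← sum_choose_sq, ← Finset.Ico_add_one_right_eq_Icc, Finset.sum_Ico_eq_sum_range]
        simp only [Nat.add_sub_cancel, Nat.add_sub_cancel_left]
        exact Finset.sum_le_sum_of_subset (Finset.range_subset_range.2 (by omega))
      calc ∑ r ∈ Finset.Icc 1 n, ((n.choose (r - 1) : ℝ)) ^ 2
          = ((∑ r ∈ Finset.Icc 1 n, (n.choose (r - 1)) ^ 2 : ℕ) : ℝ) := by push_cast; ring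
        _ ≤ _ := by exact_mod_cast hnat
    have hB : ∑ r ∈ Finset.Icc 1 n, (Real.sqrt ((2 * (p - r)).choose (p - r) : ℝ)) ^ 2
        ≤ (n : ℝ) * ((2 * n).choose n : ℝ) := by
      have : ∀ r ∈ Finset.Icc 1 n, (Real.sqrt ((2 * (p - r)).choose (p - r) : ℝ)) ^ 2
          ≤ ((2 * n).choose n : ℝ) := by
        intro r hr
        rw [Finset.mem_Icc] at hr
        rw [Real.sq_sqrt (by positivity)]
        exact_mod_cast central_le (p - r) n (by omega)
      calc _ ≤ ∑ _r ∈ Finset.Icc 1 n, (((2 * n).choose n : ℕ) : ℝ) := Finset.sum_le_sum this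
        _ = (n : ℝ) * ((2 * n).choose n : ℝ) := by
            simp [Finset.sum_const, Nat.card_Icc, nsmul_eq_mul]
    have hcb : (0:ℝ) ≤ ((2 * n).choose n : ℝ) := by positivity
    have hfin : ∑ r ∈ Finset.Icc 1 n,
        ((n.choose (r - 1) : ℝ)) * Real.sqrt ((2 * (p - r)).choose (p - r) : ℝ)
        ≤ Real.sqrt (n : ℝ) * ((2 * n).choose n : ℝ) := by
      refine hcs.trans ?_
      calc Real.sqrt (∑ r ∈ Finset.Icc 1 n, ((n.choose (r - 1) : ℝ)) ^ 2) *
            Real.sqrt (∑ r ∈ Finset.Icc 1 n, (Real.sqrt ((2 * (p - r)).choose (p - r) : ℝ)) ^ 2)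
          ≤ Real.sqrt ((2 * n).choose n : ℝ) * Real.sqrt ((n : ℝ) * ((2 * n).choose n : ℝ)) := by
            gcongr
        _ = Real.sqrt (n : ℝ) * ((2 * n).choose n : ℝ) := by
            rw [Real.sqrt_mul (by positivity), ← mul_assoc,
              mul_comm (Real.sqrt ((2 * n).choose n : ℝ)) (Real.sqrt (n:ℝ)), mul_assoc,
              Real.mul_self_sqrt hcb]
    have hcast : ((p : ℝ) - 1) = ((n : ℕ) : ℝ) := by
      rw [hn]; push_cast [Nat.cast_sub (by omega : 1 ≤ p)]; ring
    rw [hcast, mul_assoc]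
    exact mul_le_mul_of_nonneg_left hfin (by positivity)
  · refine ⟨1, one_pos, fun p hp => ?_⟩
    set n := p - 1 with hn
    rw [B1_eq, one_mul]
    have hstep : ∑ r ∈ Finset.Icc 1 n,
        ((n.choose (r - 1) : ℝ)) * Real.sqrt ((2 * (p - r)).choose (p - r) : ℝ)
        ≤ ∑ r ∈ Finset.Icc 1 n, ((n.choose (r - 1) : ℝ)) * (2 : ℝ) ^ n := by
      refine Finset.sum_le_sum fun r hr => ?_
      rw [Finset.mem_Icc] at hr
      refine mul_le_mul_of_nonneg_left ?_ (by positivity)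
      have h1 : ((2 * (p - r)).choose (p - r) : ℝ) ≤ (4 : ℝ) ^ (p - r) := by
        exact_mod_cast central_le_four_pow (p - r)
      calc Real.sqrt ((2 * (p - r)).choose (p - r) : ℝ)
          ≤ Real.sqrt ((4 : ℝ) ^ (p - r)) := Real.sqrt_le_sqrt h1
        _ = (2 : ℝ) ^ (p - r) := by
            have h4 : ((2:ℝ) ^ (p - r)) ^ 2 = (4:ℝ) ^ (p - r) := by
              rw [← pow_mul, mul_comm, pow_mul]; norm_num
            rw [← h4, Real.sqrt_sq (by positivity)]
        _ ≤ (2 : ℝ) ^ n := by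
            apply pow_le_pow_right₀ (by norm_num); omega
    have hsum : ∑ r ∈ Finset.Icc 1 n, ((n.choose (r - 1) : ℝ)) ≤ (2:ℝ) ^ n := by
      have hnat : ∑ r ∈ Finset.Icc 1 n, n.choose (r - 1) ≤ 2 ^ n := by
        rw [← Nat.sum_range_choose n, ← Finset.Ico_add_one_right_eq_Icc, Finset.sum_Ico_eq_sum_range]
        simp only [Nat.add_sub_cancel, Nat.add_sub_cancel_left]
        exact Finset.sum_le_sum_of_subset (Finset.range_subset_range.2 (by omega))
      calc ∑ r ∈ Finset.Icc 1 n, ((n.choose (r - 1) : ℝ))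
          = ((∑ r ∈ Finset.Icc 1 n, n.choose (r - 1) : ℕ) : ℝ) := by push_cast; ring
        _ ≤ _ := by exact_mod_cast hnat
    calc ((n.factorial : ℝ)) * ∑ r ∈ Finset.Icc 1 n,
          ((n.choose (r - 1) : ℝ)) * Real.sqrt ((2 * (p - r)).choose (p - r) : ℝ)
        ≤ (n.factorial : ℝ) * ((2:ℝ) ^ n * (2:ℝ) ^ n) := by
          refine mul_le_mul_of_nonneg_left ?_ (by positivity)
          refine hstep.trans ?_
          rw [← Finset.sum_mul]
          exact mul_le_mul_of_nonneg_right hsum (by positivity)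
      _ ≤ (n.factorial : ℝ) * (4:ℝ) ^ p := by
          refine mul_le_mul_of_nonneg_left ?_ (by positivity)
          rw [← pow_add, show (4:ℝ) = 2^2 by norm_num, ← pow_mul]
          apply pow_le_pow_right₀ (by norm_num); omega
end

section
/- For every integer p ≥ m+1 ≥ 2, Σ_{q=m}^{p−1} Σ_{r=1}^{q} (r−1)! · C(p−1, r−1) · C(q−1, r−1) · √((p+q−2r)!) ≤ (p−1)! · (p−1)^{3/2} · C(2(p−1), p−1), and consequently this double sum is bounded by K · (p−1)! · (2+ε)^{2p} for any ε > 0 and some constant K = K(ε). -/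
open Real

noncomputable def doubleSum (m p : ℕ) : ℝ :=
  ∑ q ∈ Finset.Icc m (p - 1), ∑ r ∈ Finset.Icc 1 q,
    (Nat.factorial (r - 1) : ℝ) * (Nat.choose (p - 1) (r - 1) : ℝ) *
      (Nat.choose (q - 1) (r - 1) : ℝ) * Real.sqrt (Nat.factorial (p + q - 2 * r))

private lemma term_bound {p q r : ℕ} (hr1 : 1 ≤ r) (hrq : r ≤ q) (hq : q ≤ p - 1) (hp : 2 ≤ p) :
    (Nat.factorial (r - 1) : ℝ) * (Nat.choose (p - 1) (r - 1) : ℝ) *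
      Real.sqrt (Nat.factorial (p + q - 2 * r))
      ≤ (Nat.factorial (p - 1) : ℝ) * Real.sqrt (Nat.centralBinom (p - 1)) := by
  have hrp : r ≤ p - 1 := le_trans hrq hq
  -- (p+q-2r)! ≤ (2(p-r))!
  have h1 : (Nat.factorial (p + q - 2 * r) : ℝ) ≤ (Nat.factorial (2 * (p - r)) : ℝ) := by
    exact_mod_cast Nat.factorial_le (by omega)
  -- (2(p-r))! = centralBinom (p-r) * (p-r)! * (p-r)!
  have h2 : Nat.centralBinom (p - r) * Nat.factorial (p - r) * Nat.factorial (p - r)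
      = Nat.factorial (2 * (p - r)) := by
    have h := Nat.choose_mul_factorial_mul_factorial (show p - r ≤ 2 * (p - r) by omega)
    have e : 2 * (p - r) - (p - r) = p - r := by omega
    rw [e] at h
    simpa [Nat.centralBinom] using h
  have hsq : Real.sqrt (Nat.factorial (p + q - 2 * r))
      ≤ (Nat.factorial (p - r) : ℝ) * Real.sqrt (Nat.centralBinom (p - r)) := by
    have : Real.sqrt (Nat.factorial (p + q - 2 * r)) ≤ Real.sqrt (Nat.factorial (2 * (p - r))) :=
      Real.sqrt_le_sqrt h1
    refine this.trans_eq ?_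
    rw [← h2]
    push_cast
    rw [show (Nat.centralBinom (p - r) : ℝ) * (Nat.factorial (p - r) : ℝ) *
        (Nat.factorial (p - r) : ℝ)
        = ((Nat.factorial (p - r) : ℝ)) ^ 2 * (Nat.centralBinom (p - r) : ℝ) by ring]
    rw [Real.sqrt_mul (by positivity), Real.sqrt_sq (by positivity)]
  have hmono : Real.sqrt (Nat.centralBinom (p - r)) ≤ Real.sqrt (Nat.centralBinom (p - 1)) := by
    apply Real.sqrt_le_sqrt
    have : Nat.centralBinom (p - r) ≤ Nat.centralBinom (p - 1) := by
      calc Nat.centralBinom (p - r) = Nat.choose (2 * (p - r)) (p - r) := rfl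
        _ ≤ Nat.choose (2 * (p - 1)) (p - r) := Nat.choose_le_choose _ (by omega)
        _ ≤ Nat.centralBinom (p - 1) := Nat.choose_le_centralBinom _ _
    exact_mod_cast this
  have hfact : (Nat.factorial (r - 1) : ℝ) * (Nat.choose (p - 1) (r - 1) : ℝ) *
      (Nat.factorial (p - r) : ℝ) = (Nat.factorial (p - 1) : ℝ) := by
    have h := Nat.choose_mul_factorial_mul_factorial (show r - 1 ≤ p - 1 by omega)
    have e : p - 1 - (r - 1) = p - r := by omega
    rw [e] at h
    exact_mod_cast by rw [← h]; ring
  calc (Nat.factorial (r - 1) : ℝ) * (Nat.choose (p - 1) (r - 1) : ℝ) *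
        Real.sqrt (Nat.factorial (p + q - 2 * r))
      ≤ (Nat.factorial (r - 1) : ℝ) * (Nat.choose (p - 1) (r - 1) : ℝ) *
        ((Nat.factorial (p - r) : ℝ) * Real.sqrt (Nat.centralBinom (p - r))) := by
        apply mul_le_mul_of_nonneg_left hsq (by positivity)
    _ = (Nat.factorial (p - 1) : ℝ) * Real.sqrt (Nat.centralBinom (p - r)) := by
        rw [← hfact]; ring
    _ ≤ (Nat.factorial (p - 1) : ℝ) * Real.sqrt (Nat.centralBinom (p - 1)) :=
        mul_le_mul_of_nonneg_left hmono (by positivity)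

private lemma pow_sqrt_bound {n : ℕ} (hn : 1 ≤ n) :
    (2 : ℝ) ^ (n - 1) * Real.sqrt (Nat.centralBinom n)
      ≤ Real.sqrt n * (Nat.centralBinom n : ℝ) := by
  have h4 : (4 : ℝ) ^ (n - 1) ≤ (n : ℝ) * Nat.centralBinom n := by
    have h := Nat.four_pow_le_two_mul_self_mul_centralBinom n hn
    have h' : 4 ^ (n - 1) * 4 ≤ (n * Nat.centralBinom n) * 4 := by
      calc 4 ^ (n - 1) * 4 = 4 ^ n := by
            rw [← pow_succ]; congr 1; omega
        _ ≤ 2 * n * Nat.centralBinom n := h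
        _ ≤ (n * Nat.centralBinom n) * 4 := by nlinarith [Nat.centralBinom_pos n]
    exact_mod_cast Nat.le_of_mul_le_mul_right h' (by norm_num)
  have hC : (0:ℝ) ≤ (Nat.centralBinom n : ℝ) := by positivity
  have key : (2 : ℝ) ^ (n - 1) ≤ Real.sqrt n * Real.sqrt (Nat.centralBinom n) := by
    rw [← Real.sqrt_mul_self (show (0:ℝ) ≤ (2:ℝ)^(n-1) by positivity),
      ← Real.sqrt_mul (by positivity)]
    apply Real.sqrt_le_sqrt
    calc (2:ℝ)^(n-1) * (2:ℝ)^(n-1) = (4:ℝ)^(n-1) := by rw [← mul_pow]; norm_num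
      _ ≤ (n : ℝ) * Nat.centralBinom n := h4
  calc (2 : ℝ) ^ (n - 1) * Real.sqrt (Nat.centralBinom n)
      ≤ (Real.sqrt n * Real.sqrt (Nat.centralBinom n)) * Real.sqrt (Nat.centralBinom n) :=
        mul_le_mul_of_nonneg_right key (Real.sqrt_nonneg _)
    _ = Real.sqrt n * (Nat.centralBinom n : ℝ) := by
        rw [mul_assoc, Real.mul_self_sqrt hC]

private lemma part1 : ∀ m p : ℕ, 1 ≤ m → m + 1 ≤ p →
    doubleSum m p ≤ (Nat.factorial (p - 1) : ℝ) *
      ((p : ℝ) - 1) ^ ((3 : ℝ) / 2) * (Nat.choose (2 * (p - 1)) (p - 1) : ℝ) := by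
  intro m p hm hp
  set n := p - 1 with hn
  have hp2 : 2 ≤ p := by omega
  have hn1 : 1 ≤ n := by omega
  have hnpos : (0 : ℝ) < (n : ℝ) := by exact_mod_cast hn1
  set Cb : ℝ := (Nat.centralBinom n : ℝ) with hCb
  have hCb0 : 0 ≤ Cb := by positivity
  -- inner sum bound
  have inner : ∀ q ∈ Finset.Icc m n,
      (∑ r ∈ Finset.Icc 1 q,
        (Nat.factorial (r - 1) : ℝ) * (Nat.choose (p - 1) (r - 1) : ℝ) *
          (Nat.choose (q - 1) (r - 1) : ℝ) * Real.sqrt (Nat.factorial (p + q - 2 * r)))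
      ≤ (Nat.factorial n : ℝ) * (Real.sqrt n * Cb) := by
    intro q hq
    rw [Finset.mem_Icc] at hq
    have step1 : (∑ r ∈ Finset.Icc 1 q,
        (Nat.factorial (r - 1) : ℝ) * (Nat.choose (p - 1) (r - 1) : ℝ) *
          (Nat.choose (q - 1) (r - 1) : ℝ) * Real.sqrt (Nat.factorial (p + q - 2 * r)))
        ≤ ∑ r ∈ Finset.Icc 1 q,
          (Nat.choose (q - 1) (r - 1) : ℝ) * ((Nat.factorial n : ℝ) * Real.sqrt Cb) := by
      apply Finset.sum_le_sum
      intro r hr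
      rw [Finset.mem_Icc] at hr
      have tb := term_bound hr.1 hr.2 hq.2 hp2
      calc (Nat.factorial (r - 1) : ℝ) * (Nat.choose (p - 1) (r - 1) : ℝ) *
            (Nat.choose (q - 1) (r - 1) : ℝ) * Real.sqrt (Nat.factorial (p + q - 2 * r))
          = (Nat.choose (q - 1) (r - 1) : ℝ) *
            ((Nat.factorial (r - 1) : ℝ) * (Nat.choose (p - 1) (r - 1) : ℝ) *
            Real.sqrt (Nat.factorial (p + q - 2 * r))) := by ring
        _ ≤ (Nat.choose (q - 1) (r - 1) : ℝ) * ((Nat.factorial n : ℝ) * Real.sqrt Cb) := by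
            exact mul_le_mul_of_nonneg_left tb (by positivity)
    have hsum : (∑ r ∈ Finset.Icc 1 q, (Nat.choose (q - 1) (r - 1) : ℝ)) = 2 ^ (q - 1) := by
      have h1 : (∑ r ∈ Finset.Icc 1 q, (Nat.choose (q - 1) (r - 1) : ℝ))
          = ∑ i ∈ Finset.range ((q - 1) + 1), (Nat.choose (q - 1) i : ℝ) := by
        refine Finset.sum_nbij' (fun r => r - 1) (fun i => i + 1) ?_ ?_ ?_ ?_ ?_ <;>
            simp only [Finset.mem_Icc, Finset.mem_range]
        · intro a ha; omega
        · intro a ha; omega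
        · intro a ha; omega
        · intro a ha; omega
        · intro a ha; trivial
      rw [h1]
      exact_mod_cast congrArg (Nat.cast (R := ℝ)) (Nat.sum_range_choose (q - 1))
    refine step1.trans ?_
    rw [← Finset.sum_mul, hsum]
    have h2q : (2:ℝ) ^ (q - 1) ≤ (2:ℝ) ^ (n - 1) :=
      pow_le_pow_right₀ (by norm_num) (by omega)
    calc (2:ℝ) ^ (q - 1) * ((Nat.factorial n : ℝ) * Real.sqrt Cb)
        ≤ (2:ℝ) ^ (n - 1) * ((Nat.factorial n : ℝ) * Real.sqrt Cb) := by
          apply mul_le_mul_of_nonneg_right h2q (by positivity)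
      _ = (Nat.factorial n : ℝ) * ((2:ℝ) ^ (n - 1) * Real.sqrt Cb) := by ring
      _ ≤ (Nat.factorial n : ℝ) * (Real.sqrt n * Cb) := by
          apply mul_le_mul_of_nonneg_left _ (by positivity)
          exact pow_sqrt_bound hn1
  have total : doubleSum m p ≤ (n : ℝ) * ((Nat.factorial n : ℝ) * (Real.sqrt n * Cb)) := by
    unfold doubleSum
    calc (∑ q ∈ Finset.Icc m (p-1), ∑ r ∈ Finset.Icc 1 q,
          (Nat.factorial (r - 1) : ℝ) * (Nat.choose (p - 1) (r - 1) : ℝ) *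
            (Nat.choose (q - 1) (r - 1) : ℝ) * Real.sqrt (Nat.factorial (p + q - 2 * r)))
        ≤ ∑ q ∈ Finset.Icc m n, (Nat.factorial n : ℝ) * (Real.sqrt n * Cb) :=
          Finset.sum_le_sum inner
      _ = ((Finset.Icc m n).card : ℝ) * ((Nat.factorial n : ℝ) * (Real.sqrt n * Cb)) := by
          rw [Finset.sum_const, nsmul_eq_mul]
      _ ≤ (n : ℝ) * ((Nat.factorial n : ℝ) * (Real.sqrt n * Cb)) := by
          apply mul_le_mul_of_nonneg_right _ (by positivity)
          rw [Nat.card_Icc]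
          exact_mod_cast (show n + 1 - m ≤ n by omega)
  refine total.trans_eq ?_
  have hcast : ((p : ℝ) - 1) = (n : ℝ) := by
    rw [hn]; push_cast [Nat.cast_sub (by omega : 1 ≤ p)]; ring
  have hrpow : ((n : ℝ)) ^ ((3:ℝ)/2) = (n : ℝ) * Real.sqrt n := by
    rw [Real.sqrt_eq_rpow, show (3:ℝ)/2 = 1 + 1/2 by norm_num, Real.rpow_add hnpos,
      Real.rpow_one]
  rw [hcast, hrpow]
  have : (Nat.choose (2 * (p - 1)) (p - 1) : ℝ) = Cb := by rw [hCb, Nat.centralBinom, hn]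
  rw [this]
  ring

theorem stmt_19 :
    (∀ m p : ℕ, 1 ≤ m → m + 1 ≤ p →
      doubleSum m p ≤ (Nat.factorial (p - 1) : ℝ) *
        ((p : ℝ) - 1) ^ ((3 : ℝ) / 2) * (Nat.choose (2 * (p - 1)) (p - 1) : ℝ)) ∧
    (∀ ε : ℝ, 0 < ε → ∃ K : ℝ, 0 < K ∧ ∀ m p : ℕ, 1 ≤ m → m + 1 ≤ p →
      doubleSum m p ≤ K * (Nat.factorial (p - 1) : ℝ) * (2 + ε) ^ (2 * p)) := by
  constructor
  · exact part1
  · intro ε hε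
    set c : ℝ := ((2 + ε) / 2) ^ 2 with hc
    have hc1 : 1 < c := by
      rw [hc]; nlinarith
    obtain ⟨K', hK'⟩ := ((tendsto_pow_const_div_const_pow_of_one_lt 2 hc1).bddAbove_range)
    have hK'mem : ∀ k : ℕ, (k : ℝ) ^ 2 / c ^ k ≤ K' := fun k =>
      hK' (Set.mem_range_self k)
    have hK'0 : 0 ≤ K' := by
      have := hK'mem 0
      simpa using this
    refine ⟨K' + 1, by linarith, ?_⟩
    intro m p hm hp
    set n := p - 1 with hn
    have hp2 : 2 ≤ p := by omega
    have hn1 : 1 ≤ n := by omega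
    have hnpos : (0 : ℝ) < (n : ℝ) := by exact_mod_cast hn1
    have h1 := part1 m p hm hp
    have hcast : ((p : ℝ) - 1) = (n : ℝ) := by
      rw [hn]; push_cast [Nat.cast_sub (by omega : 1 ≤ p)]; ring
    rw [hcast] at h1
    have hrp : ((n:ℝ)) ^ ((3:ℝ)/2) ≤ (n:ℝ) ^ (2:ℕ) := by
      rw [← Real.rpow_natCast (n:ℝ) 2]
      exact Real.rpow_le_rpow_of_exponent_le (by exact_mod_cast hn1) (by norm_num)
    have hcb : (Nat.choose (2 * n) n : ℝ) ≤ (4:ℝ) ^ n := by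
      have : Nat.choose (2 * n) n ≤ 2 ^ (2 * n) := by
        calc Nat.choose (2 * n) n ≤ ∑ i ∈ Finset.range (2*n+1), Nat.choose (2*n) i :=
              Finset.single_le_sum (fun i _ => Nat.zero_le _)
                (Finset.mem_range.mpr (by omega))
          _ = 2 ^ (2 * n) := Nat.sum_range_choose (2*n)
      calc (Nat.choose (2 * n) n : ℝ) ≤ ((2:ℝ)) ^ (2*n) := by exact_mod_cast this
        _ = (4:ℝ) ^ n := by rw [pow_mul]; norm_num
    have hnK : ((n:ℝ)) ^ (2:ℕ) ≤ K' * c ^ n := by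
      have hcn : (0:ℝ) < c ^ n := by positivity
      have := hK'mem n
      rw [div_le_iff₀ hcn] at this
      exact this
    have hcpow : c ^ n ≤ c ^ p := pow_le_pow_right₀ (le_of_lt hc1) (by omega)
    have h4pow : (4:ℝ) ^ n ≤ (4:ℝ) ^ p := pow_le_pow_right₀ (by norm_num) (by omega)
    have hfinal : (Nat.factorial n : ℝ) * ((n:ℝ)) ^ ((3:ℝ)/2) * (Nat.choose (2 * n) n : ℝ)
        ≤ (K' + 1) * (Nat.factorial n : ℝ) * (2 + ε) ^ (2 * p) := by
      have hf0 : (0:ℝ) ≤ (Nat.factorial n : ℝ) := by positivity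
      have e : (2 + ε) ^ (2 * p) = (4:ℝ) ^ p * c ^ p := by
        rw [pow_mul, hc]
        rw [← mul_pow]
        congr 1
        field_simp
        ring
      rw [e]
      have h35 : (0:ℝ) ≤ ((n:ℝ)) ^ ((3:ℝ)/2) := Real.rpow_nonneg (le_of_lt hnpos) _
      calc (Nat.factorial n : ℝ) * ((n:ℝ)) ^ ((3:ℝ)/2) * (Nat.choose (2 * n) n : ℝ)
          ≤ (Nat.factorial n : ℝ) * ((n:ℝ) ^ (2:ℕ)) * (4:ℝ) ^ n := by
            apply mul_le_mul (mul_le_mul_of_nonneg_left hrp hf0) hcb (by positivity)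
              (by positivity)
        _ ≤ (Nat.factorial n : ℝ) * (K' * c ^ n) * (4:ℝ) ^ n := by
            apply mul_le_mul_of_nonneg_right (mul_le_mul_of_nonneg_left hnK hf0)
              (by positivity)
        _ ≤ (Nat.factorial n : ℝ) * (K' * c ^ p) * (4:ℝ) ^ p := by
            apply mul_le_mul (mul_le_mul_of_nonneg_left
              (mul_le_mul_of_nonneg_left hcpow hK'0) hf0) h4pow (by positivity)
              (by positivity)
        _ = K' * ((Nat.factorial n : ℝ) * ((4:ℝ) ^ p * c ^ p)) := by ring
        _ ≤ (K' + 1) * ((Nat.factorial n : ℝ) * ((4:ℝ) ^ p * c ^ p)) := by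
            apply mul_le_mul_of_nonneg_right (by linarith)
            have hcpos : (0:ℝ) < c := by linarith
            positivity
        _ = (K' + 1) * (Nat.factorial n : ℝ) * ((4:ℝ) ^ p * c ^ p) := by ring
    exact h1.trans hfinal
end
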